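/- arXiv:2511.12849 — 3 statements merged into one kernel-verified Lean document; each statement's English description precedes it below -/
import Mathlib

section
/- Equality case of Young's inequality: for an Orlicz function φ with right-derivative p and complementary function ψ with right-derivative q, the equality u·v = φ(u) + ψ(v) holds if and only if v ∈ [p₋(u), p(u)], where p₋(0)=0 and p₋(t) = sup{p(s) : 0 ≤ s < t} for t > 0. -/
open MeasureTheory Set Filter
open scoped ENNReal

/-- Equality case of Young's inequality.  For an Orlicz function
`φ(u) = ∫₀ᵘ p` with non-decreasing right-continuous right-derivative `p`, left-limit
function `p₋` (`p₋ 0 = 0`, `p₋ t = sup {p s : 0 ≤ s < t}` for `t > 0`), and complementary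
function `ψ(v) = sup_{u>0}(u·v − φ(u))`, for all `u, v ≥ 0` the equality
`u·v = φ(u) + ψ(v)` holds iff `v ∈ [p₋(u), p(u)]`. -/
theorem young_equality_case (φ ψ p pm : ℝ → ℝ)
    (hconv : ConvexOn ℝ (Set.Ici 0) φ) (hφ0 : φ 0 = 0)
    (hφpos : ∀ u > (0 : ℝ), 0 < φ u)
    (hpmono : MonotoneOn p (Set.Ici 0)) (hpnn : ∀ u ≥ (0 : ℝ), 0 ≤ p u)
    (hprc : ∀ u ≥ (0 : ℝ), ContinuousWithinAt p (Set.Ici u) u)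
    (hφint : ∀ u ≥ (0 : ℝ), φ u = ∫ t in Set.Ioc (0 : ℝ) u, p t)
    (hpm0 : pm 0 = 0)
    (hpm : ∀ t > (0 : ℝ), pm t = sSup (p '' Set.Ico (0 : ℝ) t))
    (hbdd : ∀ v ≥ (0 : ℝ), BddAbove ((fun u => u * v - φ u) '' Set.Ioi (0 : ℝ)))
    (hψ : ∀ v : ℝ, ψ v = sSup ((fun u => u * v - φ u) '' Set.Ioi (0 : ℝ))) :
    ∀ u ≥ (0 : ℝ), ∀ v ≥ (0 : ℝ),
      (u * v = φ u + ψ v ↔ v ∈ Set.Icc (pm u) (p u)) := by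
  -- Integrability of p on Ioc a b for 0 ≤ a
  have hInt : ∀ a b : ℝ, 0 ≤ a → IntegrableOn p (Set.Ioc a b) volume := by
    intro a b ha
    rcases le_or_gt b a with h | h
    · rw [Set.Ioc_eq_empty (not_lt.mpr h)]
      exact integrableOn_empty
    · have hm : MonotoneOn p (Set.Icc 0 b) := hpmono.mono Set.Icc_subset_Ici_self
      have hint := hm.integrableOn_isCompact isCompact_Icc (μ := volume)
      exact hint.mono_set (fun x hx => ⟨le_trans ha hx.1.le, hx.2⟩)
  -- difference of φ as an integral
  have hdiff : ∀ a b : ℝ, 0 ≤ a → a ≤ b → φ b - φ a = ∫ t in Set.Ioc a b, p t := by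
    intro a b ha hab
    have h1 := hφint a ha
    have h2 := hφint b (ha.trans hab)
    have hun : Set.Ioc 0 a ∪ Set.Ioc a b = Set.Ioc 0 b := Set.Ioc_union_Ioc_eq_Ioc ha hab
    have hd : Disjoint (Set.Ioc (0:ℝ) a) (Set.Ioc a b) := Set.Ioc_disjoint_Ioc_of_le le_rfl
    rw [h1, h2, ← hun,
      MeasureTheory.setIntegral_union hd measurableSet_Ioc (hInt 0 a le_rfl) (hInt a b ha)]
    ring
  -- lower bound for the integral
  have hlow : ∀ a b : ℝ, 0 ≤ a → a ≤ b → (b - a) * p a ≤ ∫ t in Set.Ioc a b, p t := by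
    intro a b ha hab
    have h1 : ∫ _t in Set.Ioc a b, (p a) ≤ ∫ t in Set.Ioc a b, p t := by
      apply MeasureTheory.setIntegral_mono_on
      · exact integrableOn_const (by rw [Real.volume_Ioc]; exact ENNReal.ofReal_ne_top)
      · exact hInt a b ha
      · exact measurableSet_Ioc
      · intro t ht
        exact hpmono ha (le_trans ha ht.1.le) ht.1.le
    calc (b - a) * p a = ∫ _t in Set.Ioc a b, (p a) := by
          rw [MeasureTheory.setIntegral_const, Real.volume_real_Ioc_of_le hab,
            smul_eq_mul]
      _ ≤ _ := h1
  -- upper bound for the integral, with a bound on the open interval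
  have hupIoo : ∀ a b c : ℝ, 0 ≤ a → a ≤ b → (∀ t ∈ Set.Ioo a b, p t ≤ c) →
      ∫ t in Set.Ioc a b, p t ≤ (b - a) * c := by
    intro a b c ha hab hc
    rw [MeasureTheory.integral_Ioc_eq_integral_Ioo]
    have h1 : ∫ t in Set.Ioo a b, p t ≤ ∫ _t in Set.Ioo a b, c := by
      apply MeasureTheory.setIntegral_mono_on
      · exact (hInt a b ha).mono_set Set.Ioo_subset_Ioc_self
      · exact integrableOn_const (by rw [Real.volume_Ioo]; exact ENNReal.ofReal_ne_top)
      · exact measurableSet_Ioo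
      · exact hc
    calc ∫ t in Set.Ioo a b, p t ≤ ∫ _t in Set.Ioo a b, c := h1
      _ = (b - a) * c := by
          rw [MeasureTheory.setIntegral_const, Real.volume_real_Ioo_of_le hab,
            smul_eq_mul]
  -- elements of the sup
  have hψge : ∀ v ≥ (0:ℝ), ∀ w > (0:ℝ), w * v - φ w ≤ ψ v := by
    intro v hv w hw
    rw [hψ]
    exact le_csSup (hbdd v hv) ⟨w, hw, rfl⟩
  -- φ w ≤ w * p w for w ≥ 0
  have hφle : ∀ w ≥ (0:ℝ), φ w ≤ w * p w := by
    intro w hw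
    rcases eq_or_lt_of_le hw with h | h
    · rw [← h, hφ0]; simp
    · rw [hφint w hw]
      have := hupIoo 0 w (p w) le_rfl hw
        (fun t ht => hpmono ht.1.le hw ht.2.le)
      linarith
  -- ψ is nonnegative on [0, ∞)
  have hψ0 : ∀ v ≥ (0:ℝ), 0 ≤ ψ v := by
    intro v hv
    by_contra h
    push_neg at h
    have hεpos : 0 < -ψ v := by linarith
    have hp1 : 0 ≤ p 1 := hpnn 1 (by norm_num)
    set w := min 1 ((-ψ v) / (p 1 + 1)) with hw
    have hwpos : 0 < w := lt_min one_pos (div_pos hεpos (by linarith))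
    have hw1 : w ≤ 1 := min_le_left _ _
    have hw2 : w ≤ (-ψ v) / (p 1 + 1) := min_le_right _ _
    have hφw : φ w ≤ w * p w := hφle w hwpos.le
    have hpw : p w ≤ p 1 := hpmono hwpos.le (by norm_num) hw1
    have h2 : w * p 1 ≤ ((-ψ v) / (p 1 + 1)) * p 1 :=
      mul_le_mul_of_nonneg_right hw2 hp1
    have h3 : ((-ψ v) / (p 1 + 1)) * p 1 < -ψ v := by
      rw [div_mul_eq_mul_div, div_lt_iff₀ (by linarith)]
      nlinarith
    have h4 := hψge v hv w hwpos
    nlinarith [mul_nonneg hwpos.le hv, mul_le_mul_of_nonneg_left hpw hwpos.le]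
  intro u hu v hv
  constructor
  · -- forward direction
    intro heq
    have hψv : ψ v = u * v - φ u := by linarith
    constructor
    · -- pm u ≤ v
      rcases eq_or_lt_of_le hu with h0 | hupos
      · rw [← h0, hpm0]; exact hv
      · rw [hpm u hupos]
        refine csSup_le ⟨p 0, ⟨0, ⟨le_rfl, hupos⟩, rfl⟩⟩ ?_
        rintro x ⟨s, ⟨hs0, hsu⟩, rfl⟩
        by_contra hgt
        push_neg at hgt
        have hI : (u - s) * p s ≤ ∫ t in Set.Ioc s u, p t := hlow s u hs0 hsu.le
        have hd := hdiff s u hs0 hsu.le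
        have hsle : s * v - φ s ≤ ψ v := by
          rcases eq_or_lt_of_le hs0 with h | h
          · rw [← h, hφ0]; simpa using hψ0 v hv
          · exact hψge v hv s h
        nlinarith [mul_pos (sub_pos.mpr hsu) (sub_pos.mpr hgt)]
    · -- v ≤ p u
      by_contra hlt
      push_neg at hlt
      have hcont := hprc u hu
      have hev : ∀ᶠ x in nhdsWithin u (Set.Ioi u), p x < v := by
        have h1 : ∀ᶠ x in nhdsWithin u (Set.Ici u), p x < v :=
          hcont (Iio_mem_nhds hlt)
        exact h1.filter_mono (nhdsWithin_mono u Set.Ioi_subset_Ici_self)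
      obtain ⟨w, hpw, hwu⟩ := (hev.and (eventually_mem_nhdsWithin)).exists
      have hwu' : u < w := hwu
      have hI : ∫ t in Set.Ioc u w, p t ≤ (w - u) * p w :=
        hupIoo u w (p w) hu hwu'.le
          (fun t ht => hpmono (le_trans hu ht.1.le) (le_trans hu (hwu'.le)) ht.2.le)
      have hd := hdiff u w hu hwu'.le
      have hmem := hψge v hv w (lt_of_le_of_lt hu hwu')
      nlinarith [mul_pos (sub_pos.mpr hwu') (sub_pos.mpr hpw)]
  · -- backward direction
    rintro ⟨hge, hle⟩
    have hmax : ∀ w ≥ (0:ℝ), w * v - φ w ≤ u * v - φ u := by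
      intro w hw
      rcases le_or_gt u w with h | h
      · have hd := hdiff u w hu h
        have hI := hlow u w hu h
        have h2 : (w - u) * v ≤ (w - u) * p u :=
          mul_le_mul_of_nonneg_left hle (by linarith)
        linarith
      · have hupos : 0 < u := lt_of_le_of_lt hw h
        have hd := hdiff w u hw h.le
        have hbd : BddAbove (p '' Set.Ico 0 u) := by
          refine ⟨p u, ?_⟩
          rintro x ⟨s, ⟨hs0, hsu⟩, rfl⟩
          exact hpmono hs0 hu hsu.le
        have hI : ∫ t in Set.Ioc w u, p t ≤ (u - w) * pm u := by
          apply hupIoo w u (pm u) hw h.le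
          intro t ht
          rw [hpm u hupos]
          exact le_csSup hbd ⟨t, ⟨le_trans hw ht.1.le, ht.2⟩, rfl⟩
        have h2 : (u - w) * pm u ≤ (u - w) * v :=
          mul_le_mul_of_nonneg_left hge (by linarith)
        linarith
    have hsup_le : ψ v ≤ u * v - φ u := by
      rw [hψ]
      refine csSup_le ⟨1 * v - φ 1, ⟨1, Set.mem_Ioi.mpr one_pos, rfl⟩⟩ ?_
      rintro x ⟨w, hw, rfl⟩
      exact hmax w (le_of_lt hw)
    have hsup_ge : u * v - φ u ≤ ψ v := by
      rcases eq_or_lt_of_le hu with h | h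
      · rw [← h, hφ0]; simpa using hψ0 v hv
      · exact hψge v hv u h
    linarith
end

section
/- If f and fₙ are measurable functions with |f| ≤ liminf_{n→∞} |fₙ| almost everywhere, then f* ≤ liminf_{n→∞} fₙ* pointwise, where g* denotes the decreasing rearrangement of g. -/
open MeasureTheory Set Filter
open scoped ENNReal

noncomputable def distrib (f : ℝ → ℝ) (lam : ℝ≥0∞) : ℝ≥0∞ :=
  volume {s ∈ Set.Ioi (0 : ℝ) | lam < ENNReal.ofReal |f s|}

noncomputable def rearr (f : ℝ → ℝ) (t : ℝ) : ℝ≥0∞ :=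
  sInf {lam : ℝ≥0∞ | distrib f lam ≤ ENNReal.ofReal t}

lemma distrib_eq (f : ℝ → ℝ) (hf : Measurable f) (lam : ℝ≥0∞) :
    distrib f lam = ∫⁻ s, Set.indicator {s | lam < ENNReal.ofReal |f s|} 1 s
      ∂(volume.restrict (Set.Ioi (0 : ℝ))) := by
  have hm : MeasurableSet {s : ℝ | lam < ENNReal.ofReal |f s|} :=
    measurableSet_lt measurable_const ((measurable_abs.comp hf).ennreal_ofReal)
  rw [lintegral_indicator_one hm, Measure.restrict_apply hm, distrib]
  congr 1
  ext s
  simp [mem_sep_iff, and_comm]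

lemma distrib_le_liminf (f : ℝ → ℝ) (F : ℕ → ℝ → ℝ)
    (hf : Measurable f) (hF : ∀ n, Measurable (F n))
    (h : ∀ᵐ s ∂(volume.restrict (Set.Ioi (0 : ℝ))),
      ENNReal.ofReal |f s| ≤ Filter.liminf (fun n => ENNReal.ofReal |F n s|) Filter.atTop)
    (lam : ℝ≥0∞) :
    distrib f lam ≤ Filter.liminf (fun n => distrib (F n) lam) Filter.atTop := by
  have key : distrib f lam ≤ ∫⁻ s, Filter.liminf
      (fun n => Set.indicator {s | lam < ENNReal.ofReal |F n s|} 1 s) Filter.atTop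
      ∂(volume.restrict (Set.Ioi (0 : ℝ))) := by
    rw [distrib_eq f hf]
    refine lintegral_mono_ae ?_
    filter_upwards [h] with s hs
    by_cases hfs : lam < ENNReal.ofReal |f s|
    · have h1 : lam < Filter.liminf (fun n => ENNReal.ofReal |F n s|) Filter.atTop :=
        lt_of_lt_of_le hfs hs
      have h2 : ∀ᶠ n in Filter.atTop, lam < ENNReal.ofReal |F n s| :=
        eventually_lt_of_lt_liminf h1
      have hle : (1 : ℝ≥0∞) ≤ Filter.liminf
          (fun n => Set.indicator {s | lam < ENNReal.ofReal |F n s|} (1 : ℝ → ℝ≥0∞) s)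
          Filter.atTop := by
        refine le_liminf_of_le (by isBoundedDefault) ?_
        filter_upwards [h2] with n hn
        simp [Set.indicator_apply, hn]
      refine le_trans ?_ hle
      simp only [Set.indicator_apply]
      split <;> simp
    · simp [Set.indicator_apply, hfs]
  calc distrib f lam ≤ _ := key
    _ ≤ Filter.liminf (fun n => ∫⁻ s,
        Set.indicator {s | lam < ENNReal.ofReal |F n s|} 1 s
        ∂(volume.restrict (Set.Ioi (0 : ℝ)))) Filter.atTop := by
        refine lintegral_liminf_le fun n => ?_
        exact (measurable_one).indicator
          (measurableSet_lt measurable_const ((measurable_abs.comp (hF n)).ennreal_ofReal))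
    _ = _ := by
        congr 1
        ext n
        rw [← distrib_eq (F n) (hF n)]

/-- If `|f| ≤ liminf |fₙ|` a.e. on `(0,∞)`, then `f* ≤ liminf fₙ*`
pointwise (values and liminfs taken in `ℝ≥0∞`). -/
theorem rearr_liminf (f : ℝ → ℝ) (F : ℕ → ℝ → ℝ)
    (hf : Measurable f) (hF : ∀ n, Measurable (F n))
    (h : ∀ᵐ s ∂(volume.restrict (Set.Ioi (0 : ℝ))),
      ENNReal.ofReal |f s| ≤ Filter.liminf (fun n => ENNReal.ofReal |F n s|) Filter.atTop) :
    ∀ t : ℝ, rearr f t ≤ Filter.liminf (fun n => rearr (F n) t) Filter.atTop := by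
  intro t
  set L := Filter.liminf (fun n => rearr (F n) t) Filter.atTop with hL
  -- suffices: ∀ lam > L, distrib f lam ≤ ofReal t
  have key : ∀ lam, L < lam → distrib f lam ≤ ENNReal.ofReal t := by
    intro lam hlam
    have hfreq : ∃ᶠ n in Filter.atTop, rearr (F n) t < lam :=
      frequently_lt_of_liminf_lt (by isBoundedDefault) hlam
    have hfreq2 : ∃ᶠ n in Filter.atTop, distrib (F n) lam ≤ ENNReal.ofReal t := by
      refine hfreq.mono fun n hn => ?_
      -- rearr (F n) t < lam means ∃ μ < lam in the set
      have hne : {lam : ℝ≥0∞ | distrib (F n) lam ≤ ENNReal.ofReal t}.Nonempty := by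
        by_contra hemp
        rw [Set.not_nonempty_iff_eq_empty] at hemp
        have : rearr (F n) t = ⊤ := by simp [rearr, hemp]
        rw [this] at hn
        exact (not_top_lt hn)
      obtain ⟨mu, hmu, hmul⟩ := exists_lt_of_csInf_lt hne hn
      -- distrib monotone decreasing in lam
      refine le_trans ?_ hmu
      refine measure_mono fun s hs => ?_
      exact ⟨hs.1, lt_of_le_of_lt hmul.le hs.2⟩
    exact le_trans (distrib_le_liminf f F hf hF h lam) (liminf_le_of_frequently_le hfreq2)
  -- conclude rearr f t ≤ L
  exact le_of_forall_gt_imp_ge_of_dense fun c hc => sInf_le (key c hc)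
end

section
/- Hardy–Littlewood inequality: for measurable functions f and g on (0,∞), ∫|f·g| dμ ≤ ∫₀^∞ f*(t)·g*(t) dt, where f* and g* are decreasing rearrangements. -/
open MeasureTheory Set Filter
open scoped ENNReal

lemma distrib_anti (f : ℝ → ℝ) : Antitone (distrib f) := fun a b hab =>
  measure_mono fun s hs => ⟨hs.1, lt_of_le_of_lt hab hs.2⟩

lemma rearr_anti (f : ℝ → ℝ) : Antitone (rearr f) := fun a b hab =>
  sInf_le_sInf fun lam hl => le_trans hl (ENNReal.ofReal_le_ofReal hab)

lemma meas_set_lt (c : ℝ≥0∞) : volume ({t : ℝ | ENNReal.ofReal t < c} ∩ Ioi 0) = c := by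
  rcases eq_or_ne c ∞ with rfl | hc
  · have h : {t : ℝ | ENNReal.ofReal t < ∞} ∩ Ioi 0 = Ioi 0 := by
      ext t; simp [ENNReal.ofReal_lt_top]
    rw [h, Real.volume_Ioi]
  · have h : {t : ℝ | ENNReal.ofReal t < c} ∩ Ioi 0 = Ioo 0 c.toReal := by
      ext t
      simp only [mem_inter_iff, mem_setOf_eq, mem_Ioi, mem_Ioo]
      constructor
      · rintro ⟨h1, h2⟩
        exact ⟨h2, (ENNReal.ofReal_lt_iff_lt_toReal h2.le hc).1 h1⟩
      · rintro ⟨h1, h2⟩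
        exact ⟨(ENNReal.ofReal_lt_iff_lt_toReal h1.le hc).2 h2, h1⟩
    rw [h, Real.volume_Ioo]
    simp [ENNReal.ofReal_toReal hc]

/-- right continuity of distrib -/
lemma distrib_right (f : ℝ → ℝ) (lam : ℝ≥0∞) (c : ℝ≥0∞)
    (h : ∀ m, lam < m → distrib f m ≤ c) : distrib f lam ≤ c := by
  rcases eq_or_ne lam ∞ with rfl | hl
  · have : {s ∈ Set.Ioi (0:ℝ) | (∞:ℝ≥0∞) < ENNReal.ofReal |f s|} = ∅ := by
      ext s; simp [lt_irrefl]
    simp [distrib, this]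
  · have hU : {s ∈ Set.Ioi (0:ℝ) | lam < ENNReal.ofReal |f s|}
        = ⋃ n : ℕ, {s ∈ Set.Ioi (0:ℝ) | lam + ((n:ℝ≥0∞))⁻¹ < ENNReal.ofReal |f s|} := by
      ext s
      simp only [mem_iUnion, mem_setOf_eq, mem_sep_iff]
      constructor
      · rintro ⟨hs, hlt⟩
        obtain ⟨r, hr, hradd⟩ := ENNReal.lt_iff_exists_add_pos_lt.1 hlt
        obtain ⟨n, hn⟩ := ENNReal.exists_inv_nat_lt (a := (r : ℝ≥0∞)) (by exact_mod_cast hr.ne')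
        exact ⟨n, hs, lt_of_le_of_lt (add_le_add_right hn.le lam) hradd⟩
      · rintro ⟨n, hs, hlt⟩
        exact ⟨hs, lt_of_le_of_lt (le_add_right le_rfl) hlt⟩
    have hdir : Directed (fun x1 x2 => x1 ⊆ x2)
        (fun n : ℕ => {s ∈ Set.Ioi (0:ℝ) | lam + ((n:ℝ≥0∞))⁻¹ < ENNReal.ofReal |f s|}) := by
      intro m n
      refine ⟨max m n, fun s hs => ⟨hs.1, lt_of_le_of_lt ?_ hs.2⟩,
        fun s hs => ⟨hs.1, lt_of_le_of_lt ?_ hs.2⟩⟩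
      · exact add_le_add_right (ENNReal.inv_le_inv.2 (by exact_mod_cast le_max_left m n)) lam
      · exact add_le_add_right (ENNReal.inv_le_inv.2 (by exact_mod_cast le_max_right m n)) lam
    rw [distrib, hU, hdir.measure_iUnion]
    exact iSup_le fun n => by
      rcases eq_or_ne (((n:ℝ≥0∞))⁻¹) 0 with h0 | h0
      · exact absurd (ENNReal.inv_eq_zero.1 h0) (ENNReal.natCast_ne_top n)
      · exact h _ (ENNReal.lt_add_right hl h0)

lemma rearr_le_iff (f : ℝ → ℝ) (t : ℝ) (lam : ℝ≥0∞) :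
    rearr f t ≤ lam ↔ distrib f lam ≤ ENNReal.ofReal t := by
  constructor
  · intro h
    refine distrib_right f lam _ fun m hm => ?_
    have : rearr f t < m := lt_of_le_of_lt h hm
    obtain ⟨nu, hnu, hnlt⟩ := sInf_lt_iff.1 this
    exact le_trans (distrib_anti f hnlt.le) hnu
  · intro h
    exact sInf_le h

lemma lt_rearr_iff (f : ℝ → ℝ) (t : ℝ) (lam : ℝ≥0∞) :
    lam < rearr f t ↔ ENNReal.ofReal t < distrib f lam := by
  rw [← not_le, ← not_le, rearr_le_iff]

lemma measurable_Sset (a : ℝ≥0∞) : MeasurableSet {y : ℝ | ENNReal.ofReal y < a} :=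
  ENNReal.measurable_ofReal measurableSet_Iio

lemma layer_single (a : ℝ≥0∞) :
    ∫⁻ x in Ioi (0:ℝ), {y : ℝ | ENNReal.ofReal y < a}.indicator (fun _ => (1:ℝ≥0∞)) x = a := by
  rw [lintegral_indicator (measurable_Sset a), setLIntegral_one,
    Measure.restrict_apply (measurable_Sset a), meas_set_lt]

lemma double_layer (φ ψ : ℝ → ℝ≥0∞) (hφ : Measurable φ) (hψ : Measurable ψ) :
    ∫⁻ s in Ioi (0:ℝ), φ s * ψ s =
      ∫⁻ l in Ioi (0:ℝ), ∫⁻ m in Ioi (0:ℝ),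
        volume {s ∈ Ioi (0:ℝ) | ENNReal.ofReal l < φ s ∧ ENNReal.ofReal m < ψ s} := by
  have hind : ∀ (h : ℝ → ℝ≥0∞), Measurable h →
      Measurable fun p : ℝ × ℝ => ({y : ℝ | ENNReal.ofReal y < h p.1}).indicator
        (fun _ => (1:ℝ≥0∞)) p.2 := by
    intro h hh
    have hset : MeasurableSet {p : ℝ × ℝ | ENNReal.ofReal p.2 < h p.1} :=
      measurableSet_lt (ENNReal.measurable_ofReal.comp measurable_snd) (hh.comp measurable_fst)
    have : (fun p : ℝ × ℝ => ({y : ℝ | ENNReal.ofReal y < h p.1}).indicator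
        (fun _ => (1:ℝ≥0∞)) p.2) = {p : ℝ × ℝ | ENNReal.ofReal p.2 < h p.1}.indicator
        (fun _ => (1:ℝ≥0∞)) := by
      ext p
      by_cases hp : ENNReal.ofReal p.2 < h p.1 <;>
        simp [Set.indicator, hp]
    rw [this]
    exact measurable_const.indicator hset
  calc ∫⁻ s in Ioi (0:ℝ), φ s * ψ s
      = ∫⁻ s in Ioi (0:ℝ), ∫⁻ l in Ioi (0:ℝ),
          ({y : ℝ | ENNReal.ofReal y < φ s}).indicator (fun _ => (1:ℝ≥0∞)) l * ψ s := by
        refine lintegral_congr fun s => ?_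
        rw [lintegral_mul_const _ (measurable_const.indicator (measurable_Sset _)),
          layer_single]
    _ = ∫⁻ l in Ioi (0:ℝ), ∫⁻ s in Ioi (0:ℝ),
          ({y : ℝ | ENNReal.ofReal y < φ s}).indicator (fun _ => (1:ℝ≥0∞)) l * ψ s := by
        refine lintegral_lintegral_swap ?_
        exact (((hind φ hφ).mul (hψ.comp measurable_fst))).aemeasurable
    _ = ∫⁻ l in Ioi (0:ℝ), ∫⁻ s in Ioi (0:ℝ), ∫⁻ m in Ioi (0:ℝ),
          ({y : ℝ | ENNReal.ofReal y < φ s}).indicator (fun _ => (1:ℝ≥0∞)) l *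
          ({y : ℝ | ENNReal.ofReal y < ψ s}).indicator (fun _ => (1:ℝ≥0∞)) m := by
        refine lintegral_congr fun l => lintegral_congr fun s => ?_
        rw [lintegral_const_mul' _ _ (by
          by_cases hp : ENNReal.ofReal l < φ s <;> simp [Set.indicator, hp]), layer_single]
    _ = ∫⁻ l in Ioi (0:ℝ), ∫⁻ m in Ioi (0:ℝ), ∫⁻ s in Ioi (0:ℝ),
          ({y : ℝ | ENNReal.ofReal y < φ s}).indicator (fun _ => (1:ℝ≥0∞)) l *
          ({y : ℝ | ENNReal.ofReal y < ψ s}).indicator (fun _ => (1:ℝ≥0∞)) m := by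
        refine lintegral_congr fun l => lintegral_lintegral_swap ?_
        refine Measurable.aemeasurable ?_
        have h1 : Measurable fun p : ℝ × ℝ =>
            ({y : ℝ | ENNReal.ofReal y < ψ p.1}).indicator (fun _ => (1:ℝ≥0∞)) p.2 :=
          hind ψ hψ
        have h2 : Measurable fun s : ℝ =>
            ({y : ℝ | ENNReal.ofReal y < φ s}).indicator (fun _ => (1:ℝ≥0∞)) l := by
          have heq : (fun s : ℝ =>
              ({y : ℝ | ENNReal.ofReal y < φ s}).indicator (fun _ => (1:ℝ≥0∞)) l) =
              ({s : ℝ | ENNReal.ofReal l < φ s}).indicator (fun _ => (1:ℝ≥0∞)) := by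
            ext s
            by_cases hp : ENNReal.ofReal l < φ s <;> simp [Set.indicator, hp]
          rw [heq]
          exact measurable_const.indicator (measurableSet_lt measurable_const hφ)
        exact (h2.comp measurable_fst).mul h1
    _ = ∫⁻ l in Ioi (0:ℝ), ∫⁻ m in Ioi (0:ℝ),
          volume {s ∈ Ioi (0:ℝ) | ENNReal.ofReal l < φ s ∧ ENNReal.ofReal m < ψ s} := by
        refine lintegral_congr fun l => lintegral_congr fun m => ?_
        have hTm : MeasurableSet ({s : ℝ | ENNReal.ofReal l < φ s} ∩
            {s : ℝ | ENNReal.ofReal m < ψ s}) :=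
          ((measurableSet_lt measurable_const hφ).inter (measurableSet_lt measurable_const hψ))
        have hfun : (fun s : ℝ =>
            ({y : ℝ | ENNReal.ofReal y < φ s}).indicator (fun _ => (1:ℝ≥0∞)) l *
            ({y : ℝ | ENNReal.ofReal y < ψ s}).indicator (fun _ => (1:ℝ≥0∞)) m) =
            ({s : ℝ | ENNReal.ofReal l < φ s} ∩ {s : ℝ | ENNReal.ofReal m < ψ s}).indicator
              (fun _ => (1:ℝ≥0∞)) := by
          ext s
          by_cases h1 : ENNReal.ofReal l < φ s <;> by_cases h2 : ENNReal.ofReal m < ψ s <;>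
            simp [Set.indicator, h1, h2]
        rw [hfun, lintegral_indicator hTm, setLIntegral_one, Measure.restrict_apply hTm]
        congr 1
        ext s
        simp only [mem_inter_iff, mem_setOf_eq, mem_sep_iff, mem_Ioi]
        tauto

/-- Hardy–Littlewood inequality:
`∫ |f·g| dμ ≤ ∫₀^∞ f*(t)·g*(t) dt`. -/
theorem hardy_littlewood (f g : ℝ → ℝ) (hf : Measurable f) (hg : Measurable g) :
    ∫⁻ s in Set.Ioi (0 : ℝ), ENNReal.ofReal |f s * g s| ≤
      ∫⁻ t in Set.Ioi (0 : ℝ), rearr f t * rearr g t := by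
  have hφ : Measurable fun s => ENNReal.ofReal |f s| :=
    ENNReal.measurable_ofReal.comp hf.abs
  have hψ : Measurable fun s => ENNReal.ofReal |g s| :=
    ENNReal.measurable_ofReal.comp hg.abs
  have hL : ∫⁻ s in Set.Ioi (0 : ℝ), ENNReal.ofReal |f s * g s| =
      ∫⁻ s in Set.Ioi (0 : ℝ), ENNReal.ofReal |f s| * ENNReal.ofReal |g s| :=
    lintegral_congr fun s => by rw [abs_mul, ENNReal.ofReal_mul (abs_nonneg _)]
  rw [hL, double_layer _ _ hφ hψ,
    double_layer _ _ (rearr_anti f).measurable (rearr_anti g).measurable]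
  refine lintegral_mono fun l => lintegral_mono fun m => ?_
  have hB : {t ∈ Ioi (0:ℝ) | ENNReal.ofReal l < rearr f t ∧ ENNReal.ofReal m < rearr g t} =
      {t : ℝ | ENNReal.ofReal t <
        min (distrib f (ENNReal.ofReal l)) (distrib g (ENNReal.ofReal m))} ∩ Ioi 0 := by
    ext t
    simp only [mem_inter_iff, mem_setOf_eq, mem_sep_iff, mem_Ioi, lt_rearr_iff, lt_min_iff]
    tauto
  rw [hB, meas_set_lt]
  exact le_min (measure_mono fun s hs => ⟨hs.1, hs.2.1⟩)
    (measure_mono fun s hs => ⟨hs.1, hs.2.2⟩)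
end
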